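/- Let ω, σ be locally finite positive Borel measures on ℝⁿ with σ ∈ A_∞ (i.e., σ(E)/σ(I) ≤ C(|E|/|I|)^ε for all cubes I and measurable E ⊂ I). If the classical two-weight A_p condition A_p(ω,σ) = sup_I (ω(I)/|I|)^{1/p}(σ(I)/|I|)^{1/p'} is finite, then the dyadic Sawyer testing condition holds: for every cube I, ∫_I (M_d(1_I σ))^p dω ≤ C' σ(I), where M_d is the dyadic maximal operator. -/

import Mathlib

open MeasureTheory ENNReal

structure Cube (n : ℕ) where
  c : Fin n → ℝ
  r : ℝ
  hr : 0 < r

namespace Cube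

def set {n : ℕ} (I : Cube n) : Set (Fin n → ℝ) :=
  {x | ∀ i, I.c i - I.r ≤ x i ∧ x i < I.c i + I.r}

noncomputable def side {n : ℕ} (I : Cube n) : ℝ := 2 * I.r

noncomputable def vol {n : ℕ} (I : Cube n) : ℝ := (2 * I.r) ^ n

def double {n : ℕ} (I : Cube n) : Cube n := ⟨I.c, 2 * I.r, by have := I.hr; linarith⟩

def triple {n : ℕ} (I : Cube n) : Cube n := ⟨I.c, 3 * I.r, by have := I.hr; linarith⟩

end Cube

noncomputable def poisson {n : ℕ} (I : Cube n) (ω : Measure (Fin n → ℝ)) : ℝ≥0∞ :=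
  ∫⁻ x, (ENNReal.ofReal (I.side / (I.side + Metric.infDist x I.set) ^ 2)) ^ n ∂ω

noncomputable def maximal {n : ℕ} (μ : Measure (Fin n → ℝ)) (x : Fin n → ℝ) : ℝ≥0∞ :=
  ⨆ (I : Cube n) (_ : x ∈ I.set), μ I.set / ENNReal.ofReal I.vol

noncomputable def wMass {n : ℕ} (w : (Fin n → ℝ) → ℝ≥0∞) (E : Set (Fin n → ℝ)) : ℝ≥0∞ :=
  ∫⁻ x in E, w x


/-- A dyadic cube `∏ᵢ [posᵢ 2ᵏ, (posᵢ+1) 2ᵏ)` in `ℝⁿ`. -/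
structure DyadicCube (n : ℕ) where
  k : ℤ
  pos : Fin n → ℤ

namespace DyadicCube

def set {n : ℕ} (D : DyadicCube n) : Set (Fin n → ℝ) :=
  {x | ∀ i, (D.pos i : ℝ) * (2:ℝ) ^ D.k ≤ x i ∧ x i < ((D.pos i : ℝ) + 1) * (2:ℝ) ^ D.k}

noncomputable def vol {n : ℕ} (D : DyadicCube n) : ℝ := ((2:ℝ) ^ D.k) ^ n

end DyadicCube

/-- The dyadic maximal function of a measure. -/
noncomputable def dyadicMaximal {n : ℕ} (μ : Measure (Fin n → ℝ)) (x : Fin n → ℝ) : ℝ≥0∞ :=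
  ⨆ (D : DyadicCube n) (_ : x ∈ D.set), μ D.set / ENNReal.ofReal D.vol

/-- The classical two-weight `A_p` characteristic. -/
noncomputable def Ap {n : ℕ} (p : ℝ) (ω σ : Measure (Fin n → ℝ)) : ℝ≥0∞ :=
  ⨆ I : Cube n, (ω I.set / ENNReal.ofReal I.vol) ^ (1 / p) *
    (σ I.set / ENNReal.ofReal I.vol) ^ (1 - 1 / p)

/-- The `A_∞` condition for a measure: `σ(E)/σ(I) ≤ C (|E|/|I|)^ε`. -/
def IsAInfty {n : ℕ} (σ : Measure (Fin n → ℝ)) : Prop :=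
  ∃ C > (0:ℝ), ∃ ε > (0:ℝ), ∀ I : Cube n, ∀ E : Set (Fin n → ℝ),
    E ⊆ I.set → MeasurableSet E →
    σ E ≤ ENNReal.ofReal (C * ((volume E).toReal / I.vol) ^ ε) * σ I.set


namespace Cube
lemma vol_pos {n : ℕ} (I : Cube n) : 0 < I.vol := by
  have := I.hr; unfold vol; positivity

lemma set_eq_pi {n : ℕ} (I : Cube n) :
    I.set = Set.univ.pi (fun i => Set.Ico (I.c i - I.r) (I.c i + I.r)) := by
  ext x; simp [set, Set.mem_pi, Set.mem_Ico]

lemma measurableSet_set {n : ℕ} (I : Cube n) : MeasurableSet I.set := by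
  rw [set_eq_pi]; exact MeasurableSet.univ_pi (fun i => measurableSet_Ico)

lemma measure_lt_top {n : ℕ} (μ : Measure (Fin n → ℝ)) [IsLocallyFiniteMeasure μ]
    (I : Cube n) : μ I.set < ⊤ := by
  have hsub : I.set ⊆ Set.Icc (fun i => I.c i - I.r) (fun i => I.c i + I.r) := by
    intro x hx
    constructor
    · intro i; exact (hx i).1
    · intro i; exact (hx i).2.le
  have hcpt : IsCompact (Set.Icc (fun i => I.c i - I.r) (fun i => I.c i + I.r)) :=
    isCompact_Icc
  exact lt_of_le_of_lt (measure_mono hsub) hcpt.measure_lt_top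

end Cube

namespace DyadicCube
instance {n : ℕ} : Countable (DyadicCube n) := by
  have : Function.Injective (fun D : DyadicCube n => (D.k, D.pos)) := by
    rintro ⟨k, pos⟩ ⟨k', pos'⟩ h
    simpa using h
  exact Function.Injective.countable this

lemma set_eq_pi {n : ℕ} (D : DyadicCube n) :
    D.set = Set.univ.pi (fun i => Set.Ico ((D.pos i : ℝ) * (2:ℝ) ^ D.k)
      (((D.pos i : ℝ) + 1) * (2:ℝ) ^ D.k)) := by
  ext x; simp [set, Set.mem_pi, Set.mem_Ico]

lemma measurableSet_set {n : ℕ} (D : DyadicCube n) : MeasurableSet D.set := by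
  rw [set_eq_pi]
  exact MeasurableSet.univ_pi (fun i => measurableSet_Ico)

lemma vol_pos {n : ℕ} (D : DyadicCube n) : 0 < D.vol := by
  have : (0:ℝ) < (2:ℝ) ^ D.k := zpow_pos (by norm_num) _
  exact pow_pos this _

lemma volume_set {n : ℕ} (D : DyadicCube n) : volume D.set = ENNReal.ofReal D.vol := by
  have h2 : (0:ℝ) < (2:ℝ) ^ D.k := zpow_pos (by norm_num) _
  rw [set_eq_pi, volume_pi_pi]
  have : ∀ i : Fin n, volume (Set.Ico ((D.pos i : ℝ) * (2:ℝ) ^ D.k)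
      (((D.pos i : ℝ) + 1) * (2:ℝ) ^ D.k)) = ENNReal.ofReal ((2:ℝ) ^ D.k) := by
    intro i
    rw [Real.volume_Ico]
    congr 1
    ring
  simp only [this, Finset.prod_const, Finset.card_univ, Fintype.card_fin]
  rw [vol, ← ENNReal.ofReal_pow h2.le]

/-- The dyadic cube at scale `k` containing `x`. -/
noncomputable def dcube {n : ℕ} (k : ℤ) (x : Fin n → ℝ) : DyadicCube n :=
  ⟨k, fun i => ⌊x i / (2:ℝ) ^ k⌋⟩

lemma mem_dcube {n : ℕ} (k : ℤ) (x : Fin n → ℝ) : x ∈ (dcube k x).set := by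
  intro i
  simp only [dcube]
  have h2 : (0:ℝ) < (2:ℝ) ^ k := zpow_pos (by norm_num) _
  constructor
  · rw [← le_div_iff₀ h2]
    exact Int.floor_le _
  · rw [← div_lt_iff₀ h2]
    exact Int.lt_floor_add_one _

lemma eq_dcube_of_mem {n : ℕ} {D : DyadicCube n} {x : Fin n → ℝ} (hx : x ∈ D.set) :
    D = dcube D.k x := by
  obtain ⟨k, pos⟩ := D
  simp only [dcube, mk.injEq, true_and]
  funext i
  have h2 : (0:ℝ) < (2:ℝ) ^ k := zpow_pos (by norm_num) _
  obtain ⟨h1, h3⟩ := hx i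
  symm
  rw [Int.floor_eq_iff]
  simp only at h1 h3
  constructor
  · rwa [le_div_iff₀ h2]
  · rw [div_lt_iff₀ h2]
    push_cast
    linarith

/-- 1-d nesting: two dyadic intervals that intersect, with `k ≤ k'`, satisfy containment. -/
lemma ico_subset_ico {k k' m m' : ℤ} (hk : k ≤ k') {z : ℝ}
    (hz : (m:ℝ) * 2 ^ k ≤ z ∧ z < ((m:ℝ) + 1) * 2 ^ k)
    (hz' : (m':ℝ) * 2 ^ k' ≤ z ∧ z < ((m':ℝ) + 1) * 2 ^ k') :
    ∀ y : ℝ, (m:ℝ) * 2 ^ k ≤ y ∧ y < ((m:ℝ) + 1) * 2 ^ k →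
      (m':ℝ) * 2 ^ k' ≤ y ∧ y < ((m':ℝ) + 1) * 2 ^ k' := by
  have h2 : (0:ℝ) < (2:ℝ) ^ k := zpow_pos (by norm_num) _
  -- 2^{k'} = q * 2^k with q = 2^(k'-k) a positive integer
  set d : ℕ := (k' - k).toNat with hd
  have hkd : k' = k + d := by omega
  have hq : (2:ℝ) ^ k' = (2^d : ℤ) * 2 ^ k := by
    rw [hkd, zpow_add₀ (by norm_num : (2:ℝ) ≠ 0), zpow_natCast]
    push_cast
    ring
  -- endpoints of the big interval are integer multiples of 2^k
  have key : ∀ a b : ℤ, (a:ℝ) * 2 ^ k < (b:ℝ) * 2 ^ k → (a:ℝ) * 2^k + 2^k ≤ (b:ℝ) * 2^k := by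
    intro a b hab
    have : a < b := by
      have := (mul_lt_mul_iff_of_pos_right h2).mp hab
      exact_mod_cast this
    have : (a:ℝ) + 1 ≤ b := by exact_mod_cast this
    nlinarith
  intro y hy
  have e1 : ((m':ℝ)) * 2 ^ k' = ((m' * 2^d : ℤ) : ℝ) * 2 ^ k := by push_cast [hq]; ring
  have e2 : ((m':ℝ) + 1) * 2 ^ k' = (((m' + 1) * 2^d : ℤ) : ℝ) * 2 ^ k := by push_cast [hq]; ring
  constructor
  · -- m' 2^k' ≤ m 2^k: since m' 2^k' ≤ z < (m+1)2^k, both multiples of 2^k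
    by_contra hcon
    push_neg at hcon
    have h1 : ((m:ℝ)) * 2^k < ((m' * 2^d : ℤ):ℝ) * 2^k := by rw [← e1]; linarith
    have := key m (m' * 2^d) h1
    rw [← e1] at this
    -- so m'2^k' ≥ (m+1)2^k > z ≥ m'2^k', contradiction with z < (m+1)2^k
    have hz1 := hz.2
    have hz2 := hz'.1
    nlinarith
  · -- (m+1)2^k ≤ (m'+1)2^k'
    have h1 : ((m:ℝ)) * 2^k < (((m'+1) * 2^d : ℤ):ℝ) * 2^k := by
      rw [← e2]; nlinarith [hz.1, hz'.2]
    have := key m ((m'+1) * 2^d) h1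
    rw [← e2] at this
    nlinarith [hy.2]

lemma subset_of_le_of_mem {n : ℕ} {D D' : DyadicCube n} (hk : D.k ≤ D'.k)
    {x : Fin n → ℝ} (hx : x ∈ D.set) (hx' : x ∈ D'.set) : D.set ⊆ D'.set := by
  intro y hy i
  exact ico_subset_ico hk (hx i) (hx' i) (y i) (hy i)

lemma k_eq_of_set_eq {n : ℕ} (hn : 0 < n) {D D' : DyadicCube n} (h : D.set = D'.set) :
    D.k = D'.k := by
  have hv : D.vol = D'.vol := by
    have := D.volume_set
    rw [h, D'.volume_set] at this
    have := congrArg ENNReal.toReal this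
    rw [ENNReal.toReal_ofReal D.vol_pos.le, ENNReal.toReal_ofReal D'.vol_pos.le] at this
    exact this.symm
  have h2 : (0:ℝ) < (2:ℝ) ^ D.k := zpow_pos (by norm_num) _
  have h2' : (0:ℝ) < (2:ℝ) ^ D'.k := zpow_pos (by norm_num) _
  have hb : (2:ℝ) ^ D.k = (2:ℝ) ^ D'.k := by
    unfold vol at hv
    by_contra hne
    rcases lt_or_gt_of_ne hne with hlt | hlt
    · have := pow_lt_pow_left₀ hlt h2.le hn.ne'
      rw [hv] at this; exact lt_irrefl _ this
    · have := pow_lt_pow_left₀ hlt h2'.le hn.ne'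
      rw [hv] at this; exact lt_irrefl _ this
  exact zpow_right_injective₀ (by norm_num) (by norm_num) hb

end DyadicCube

namespace DyadicCube
/-- A dyadic cube, seen as a `Cube`. -/
noncomputable def toCube {n : ℕ} (D : DyadicCube n) : Cube n :=
  ⟨fun i => (D.pos i : ℝ) * 2 ^ D.k + 2 ^ (D.k - 1), 2 ^ (D.k - 1),
    zpow_pos (by norm_num) _⟩

lemma half_add_half {k : ℤ} : (2:ℝ) ^ (k-1) + 2 ^ (k-1) = 2 ^ k := by
  have h : (2:ℝ) ^ (k-1) * 2 = 2 ^ k := by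
    rw [← zpow_add_one₀ (by norm_num : (2:ℝ) ≠ 0) (k-1)]
    norm_num
  linarith
lemma set_toCube {n : ℕ} (D : DyadicCube n) : D.toCube.set = D.set := by
  ext x
  simp only [Cube.set, toCube, set, Set.mem_setOf_eq]
  constructor <;> intro h i <;> obtain ⟨h1, h2⟩ := h i <;> constructor <;>
    nlinarith [half_add_half (k := D.k)]

lemma vol_toCube {n : ℕ} (D : DyadicCube n) : D.toCube.vol = D.vol := by
  simp only [Cube.vol, toCube, vol]
  congr 1
  have := half_add_half (k := D.k)
  linarith

lemma measure_lt_top {n : ℕ} (μ : Measure (Fin n → ℝ)) [IsLocallyFiniteMeasure μ]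
    (D : DyadicCube n) : μ D.set < ⊤ := by
  rw [← set_toCube]; exact Cube.measure_lt_top μ _

end DyadicCube

/-- Key `ℝ≥0∞` algebra: from the `A_p` inequality extract `x ≤ A^p v (v/y)^(p-1)`. -/
lemma enn_ap {p : ℝ} (hp : 1 < p) {x y v A : ℝ≥0∞}
    (hv : v ≠ 0) (hv' : v ≠ ⊤) (hy : y ≠ 0) (hy' : y ≠ ⊤)
    (h : (x / v) ^ (1 / p) * (y / v) ^ (1 - 1 / p) ≤ A) :
    x ≤ A ^ p * v * (v / y) ^ (p - 1) := by
  have hp0 : (0:ℝ) < p := by linarith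
  have hyv0 : y / v ≠ 0 := by simp [ENNReal.div_eq_zero_iff, hy, hv']
  have hyv' : y / v ≠ ⊤ := by simp [ENNReal.div_eq_top, hy', hv]
  have hvy0 : v / y ≠ 0 := by simp [ENNReal.div_eq_zero_iff, hv, hy']
  have hvy' : v / y ≠ ⊤ := by simp [ENNReal.div_eq_top, hv', hy]
  by_cases hx : x = ⊤
  · -- then A = ⊤ and RHS = ⊤
    have hA : A = ⊤ := by
      rw [top_le_iff.symm]
      calc (⊤:ℝ≥0∞) = (⊤:ℝ≥0∞) ^ (1/p) * (y/v) ^ (1 - 1/p) := by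
            rw [ENNReal.top_rpow_of_pos (by positivity), ENNReal.top_mul]
            simp only [ne_eq, ENNReal.rpow_eq_zero_iff, not_or, not_and]
            constructor
            · intro h'; exact absurd h' hyv0
            · intro h'; exact absurd h' hyv'
        _ ≤ A := by rw [← ENNReal.top_div_of_ne_top hv', ← hx]; exact h
    rw [hA, ENNReal.top_rpow_of_pos hp0, ENNReal.top_mul hv, ENNReal.top_mul (by simp [ENNReal.rpow_eq_zero_iff, hvy0, hvy'])]
    exact le_top
  · have hxv' : x / v ≠ ⊤ := by simp [ENNReal.div_eq_top, hx, hv]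
    have h1 : ((x / v) ^ (1 / p) * (y / v) ^ (1 - 1 / p)) ^ p ≤ A ^ p :=
      ENNReal.rpow_le_rpow h hp0.le
    rw [ENNReal.mul_rpow_of_ne_top
        (ENNReal.rpow_ne_top_of_nonneg (by positivity) hxv')
        (ENNReal.rpow_ne_top_of_nonneg (by
          have : 1/p ≤ 1 := by rw [div_le_one hp0]; linarith
          linarith) hyv'),
      ← ENNReal.rpow_mul, ← ENNReal.rpow_mul,
      one_div_mul_cancel hp0.ne', ENNReal.rpow_one] at h1
    have hexp : (1 - 1/p) * p = p - 1 := by field_simp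
    rw [hexp] at h1
    calc x = (x / v * (y/v) ^ (p-1)) * (v * (v/y) ^ (p-1)) := by
          have e1 : (y/v) ^ (p-1) * (v/y) ^ (p-1) = 1 := by
            rw [← ENNReal.mul_rpow_of_ne_top hyv' hvy']
            have hvv : v⁻¹ * v = 1 := ENNReal.inv_mul_cancel hv hv'
            have hyy : y * y⁻¹ = 1 := ENNReal.mul_inv_cancel hy hy'
            have : y / v * (v / y) = 1 := by
              rw [div_eq_mul_inv, div_eq_mul_inv]
              calc y * v⁻¹ * (v * y⁻¹) = y * (v⁻¹ * v) * y⁻¹ := by ring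
                _ = 1 := by rw [hvv, mul_one, hyy]
            rw [this, ENNReal.one_rpow]
          calc x = (x / v * v) * ((y/v) ^ (p-1) * (v/y) ^ (p-1)) := by
                rw [e1, mul_one, ENNReal.div_mul_cancel hv hv']
            _ = (x / v * (y/v) ^ (p-1)) * (v * (v/y) ^ (p-1)) := by ring
      _ ≤ A ^ p * (v * (v/y) ^ (p-1)) := mul_le_mul_left h1 _
      _ = A ^ p * v * (v/y) ^ (p-1) := (mul_assoc _ _ _).symm

namespace DyadicCube

lemma lt_dyadicMaximal_iff {n : ℕ} (μ : Measure (Fin n → ℝ)) (lam : ℝ≥0∞)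
    (x : Fin n → ℝ) :
    lam < dyadicMaximal μ x ↔ ∃ D : DyadicCube n, x ∈ D.set ∧
      lam * ENNReal.ofReal D.vol < μ D.set := by
  unfold dyadicMaximal
  rw [lt_iSup_iff]
  constructor
  · rintro ⟨D, hD⟩
    rw [lt_iSup_iff] at hD
    obtain ⟨hx, hD⟩ := hD
    refine ⟨D, hx, ?_⟩
    rwa [ENNReal.lt_div_iff_mul_lt (Or.inl (by
        simp [ENNReal.ofReal_eq_zero, not_le, D.vol_pos]))
      (Or.inl ENNReal.ofReal_ne_top)] at hD
  · rintro ⟨D, hx, hD⟩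
    refine ⟨D, ?_⟩
    rw [lt_iSup_iff]
    refine ⟨hx, ?_⟩
    rwa [ENNReal.lt_div_iff_mul_lt (Or.inl (by
        simp [ENNReal.ofReal_eq_zero, not_le, D.vol_pos]))
      (Or.inl ENNReal.ofReal_ne_top)]

/-- Decomposition of the super-level set of the dyadic maximal function into
maximal dyadic cubes. -/
lemma exists_maximal_decomp {n : ℕ} (hn : 0 < n) (μ : Measure (Fin n → ℝ))
    (hfin : μ Set.univ ≠ ⊤) (lam : ℝ≥0∞) (hl0 : lam ≠ 0) (hl' : lam ≠ ⊤) :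
    ∃ S : Set (DyadicCube n),
      (∀ D ∈ S, lam * ENNReal.ofReal D.vol < μ D.set) ∧
      S.PairwiseDisjoint DyadicCube.set ∧
      (⋃ D ∈ S, D.set) = {x | lam < dyadicMaximal μ x} := by
  classical
  set F : Set (DyadicCube n) := {D | lam * ENNReal.ofReal D.vol < μ D.set} with hF
  -- scales of cubes in F are bounded above
  set B : ℝ := (μ Set.univ / lam).toReal with hB
  have hdivtop : μ Set.univ / lam ≠ ⊤ := by
    exact (ENNReal.div_lt_top hfin hl0).ne
  have hkbd : ∀ D ∈ F, D.k ≤ max 0 ⌈Real.logb 2 B⌉ := by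
    intro D hD
    rcases le_or_gt D.k 0 with h | h
    · exact le_trans h (le_max_left _ _)
    · have hvB : D.vol ≤ B := by
        have h1 : lam * ENNReal.ofReal D.vol < μ Set.univ :=
          lt_of_lt_of_le hD (measure_mono (Set.subset_univ _))
        have h2 : ENNReal.ofReal D.vol < μ Set.univ / lam := by
          rwa [ENNReal.lt_div_iff_mul_lt (Or.inl hl0) (Or.inl hl'), mul_comm]
        have := h2.le
        rwa [ENNReal.ofReal_le_iff_le_toReal hdivtop] at this
      have h2k : (2:ℝ) ^ D.k ≤ B := by
        refine le_trans ?_ hvB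
        have h1 : (1:ℝ) ≤ (2:ℝ) ^ D.k := one_le_zpow₀ (by norm_num) h.le
        calc (2:ℝ) ^ D.k ≤ ((2:ℝ) ^ D.k) ^ n := le_self_pow₀ h1 hn.ne'
          _ = D.vol := rfl
      have hBpos : (0:ℝ) < B := lt_of_lt_of_le (zpow_pos (by norm_num) _) h2k
      have hlog : (D.k : ℝ) ≤ Real.logb 2 B := by
        have := Real.logb_le_logb_of_le (b := 2) (by norm_num)
          (zpow_pos (by norm_num : (0:ℝ) < 2) D.k) h2k
        have heq : Real.logb 2 ((2:ℝ) ^ D.k) = (D.k : ℝ) := by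
          rw [Real.logb, Real.log_zpow, mul_div_assoc,
            div_self (Real.log_pos (by norm_num)).ne', mul_one]
        rwa [heq] at this
      have : D.k ≤ ⌈Real.logb 2 B⌉ := by
        exact_mod_cast le_trans hlog (Int.le_ceil _)
      exact le_trans this (le_max_right _ _)
  set S : Set (DyadicCube n) :=
    {D ∈ F | ∀ D' ∈ F, D.set ⊆ D'.set → D = D'} with hS
  refine ⟨S, fun D hD => hD.1, ?_, ?_⟩
  · intro D₁ h₁ D₂ h₂ hne
    rw [Function.onFun]
    by_contra hcon
    obtain ⟨x, hx₁, hx₂⟩ := Set.not_disjoint_iff.mp hcon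
    rcases le_total D₁.k D₂.k with hk | hk
    · exact hne (h₁.2 D₂ h₂.1 (subset_of_le_of_mem hk hx₁ hx₂))
    · exact hne (h₂.2 D₁ h₁.1 (subset_of_le_of_mem hk hx₂ hx₁)).symm
  · ext x
    simp only [Set.mem_iUnion, Set.mem_setOf_eq]
    constructor
    · rintro ⟨D, hD, hx⟩
      rw [lt_dyadicMaximal_iff]
      exact ⟨D, hx, hD.1⟩
    · intro hx
      rw [lt_dyadicMaximal_iff] at hx
      obtain ⟨D, hxD, hDF⟩ := hx
      -- the set of scales k with dcube k x ∈ F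
      have hP : dcube D.k x ∈ F := by rw [← eq_dcube_of_mem hxD]; exact hDF
      obtain ⟨kx, hkx, hkmax⟩ := Int.exists_greatest_of_bdd
        (P := fun k => dcube k x ∈ F)
        ⟨max 0 ⌈Real.logb 2 B⌉, fun z hz => hkbd _ hz⟩ ⟨D.k, hP⟩
      refine ⟨dcube kx x, ⟨hkx, ?_⟩, mem_dcube kx x⟩
      intro D' hD' hsub
      have hxD' : x ∈ D'.set := hsub (mem_dcube kx x)
      have hD'eq : D' = dcube D'.k x := eq_dcube_of_mem hxD'
      have hk' : kx ≤ D'.k := by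
        by_contra hcon
        push_neg at hcon
        have hsub2 : D'.set ⊆ (dcube kx x).set :=
          subset_of_le_of_mem hcon.le hxD' (mem_dcube kx x)
        have heq : D'.set = (dcube kx x).set := le_antisymm hsub2 hsub
        have := k_eq_of_set_eq hn heq
        simp [dcube] at this
        omega
      have hk'' : D'.k ≤ kx := hkmax D'.k (by rw [← hD'eq]; exact hD')
      have : D'.k = kx := le_antisymm hk'' hk'
      rw [hD'eq, this]

end DyadicCube


open Filter Topology in
theorem stmt_10 (n : ℕ) (hn : 0 < n) (p : ℝ) (hp : 1 < p)
    (ω σ : Measure (Fin n → ℝ)) [IsLocallyFiniteMeasure ω] [IsLocallyFiniteMeasure σ]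
    (hσ : IsAInfty σ) (hAp : Ap p ω σ < ⊤) :
    ∃ C > (0:ℝ), ∀ I : Cube n,
      ∫⁻ x in I.set, (dyadicMaximal (σ.restrict I.set) x) ^ p ∂ω ≤
        ENNReal.ofReal C * σ I.set := by
  classical
  obtain ⟨C, hC, ε, hε, hAinf⟩ := hσ
  set A : ℝ≥0∞ := Ap p ω σ with hA
  have hAne : A ≠ ⊤ := hAp.ne
  have hp0 : (0:ℝ) < p := lt_trans one_pos hp
  -- geometric series constant
  set r : ℝ≥0∞ := ENNReal.ofReal ((2:ℝ) ^ (-ε)) with hr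
  have hrlt : r < 1 := by
    rw [hr, ← ENNReal.ofReal_one]
    exact ENNReal.ofReal_lt_ofReal_iff_of_nonneg (by positivity) |>.mpr
      (Real.rpow_lt_one_of_one_lt_of_neg (by norm_num) (by linarith))
  set G : ℝ≥0∞ := (1 - r)⁻¹ with hG
  have hGne : G ≠ ⊤ := by
    rw [hG, ENNReal.inv_ne_top]
    simp only [ne_eq, tsub_eq_zero_iff_le, not_le]
    exact hrlt
  set Ctot : ℝ≥0∞ := (2:ℝ≥0∞) ^ p * A ^ p * (1 + ENNReal.ofReal C * G) with hCtot
  have hCtotne : Ctot ≠ ⊤ := by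
    rw [hCtot]
    apply ENNReal.mul_ne_top
    apply ENNReal.mul_ne_top
    · exact ENNReal.rpow_ne_top_of_nonneg hp0.le (by norm_num)
    · exact ENNReal.rpow_ne_top_of_nonneg hp0.le hAne
    · exact ENNReal.add_ne_top.mpr ⟨ENNReal.one_ne_top,
        ENNReal.mul_ne_top ENNReal.ofReal_ne_top hGne⟩
  refine ⟨Ctot.toReal + 1, by positivity, ?_⟩
  intro I
  have hIvol : 0 < I.vol := I.vol_pos
  set v : ℝ≥0∞ := ENNReal.ofReal I.vol with hv
  have hv0 : v ≠ 0 := by simp [hv, ENNReal.ofReal_eq_zero, not_le, hIvol]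
  have hv' : v ≠ ⊤ := ENNReal.ofReal_ne_top
  set τ : Measure (Fin n → ℝ) := σ.restrict I.set with hτ
  have hτuniv : τ Set.univ = σ I.set := by
    rw [hτ, Measure.restrict_apply_univ]
  have hσItop : σ I.set ≠ ⊤ := (Cube.measure_lt_top σ I).ne
  have hτle : ∀ s : Set (Fin n → ℝ), MeasurableSet s → τ s ≤ σ s := by
    intro s hs
    rw [hτ, Measure.restrict_apply hs]
    exact measure_mono Set.inter_subset_left
  -- trivial case
  by_cases hσI0 : σ I.set = 0
  · have hM : ∀ x, (dyadicMaximal τ x) ^ p = 0 := by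
      intro x
      have : dyadicMaximal τ x = 0 := by
        unfold dyadicMaximal
        simp only [ENNReal.iSup_eq_zero]
        intro D _
        have : τ D.set ≤ σ I.set := by
          rw [← hτuniv]; exact measure_mono (Set.subset_univ _)
        rw [hσI0] at this
        simp [le_zero_iff.mp this, ENNReal.zero_div]
      rw [this, ENNReal.zero_rpow_of_pos hp0]
    calc ∫⁻ x in I.set, (dyadicMaximal τ x) ^ p ∂ω
        = ∫⁻ _ in I.set, 0 ∂ω := by
          apply lintegral_congr
          intro x; exact hM x
      _ = 0 := lintegral_zero
      _ ≤ _ := zero_le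
  -- main case
  · -- per-cube Ap bound
    have hApI : ∀ J : Cube n,
        (ω J.set / ENNReal.ofReal J.vol) ^ (1/p) *
          (σ J.set / ENNReal.ofReal J.vol) ^ (1 - 1/p) ≤ A := by
      intro J
      rw [hA]
      exact le_iSup (fun J : Cube n => (ω J.set / ENNReal.ofReal J.vol) ^ (1/p) *
        (σ J.set / ENNReal.ofReal J.vol) ^ (1 - 1/p)) J
    have hωJ : ∀ J : Cube n, σ J.set ≠ 0 →
        ω J.set ≤ A ^ p * ENNReal.ofReal J.vol *
          (ENNReal.ofReal J.vol / σ J.set) ^ (p-1) := by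
      intro J hJ
      exact enn_ap hp (by simp [ENNReal.ofReal_eq_zero, not_le, J.vol_pos])
        ENNReal.ofReal_ne_top hJ (Cube.measure_lt_top σ J).ne (hApI J)
    -- the threshold scale
    set R : ℝ := (σ I.set).toReal / I.vol with hR
    have hRpos : 0 < R := by
      apply div_pos _ hIvol
      exact ENNReal.toReal_pos hσI0 hσItop
    set m₀ : ℤ := ⌈Real.logb 2 R⌉ with hm₀
    have hm₀1 : R ≤ (2:ℝ) ^ ((m₀:ℝ)) := by
      rw [← Real.rpow_logb (b := 2) (by norm_num) (by norm_num) hRpos]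
      exact (Real.rpow_le_rpow_left_iff (by norm_num)).mpr (Int.le_ceil _)
    have hm₀2 : (2:ℝ) ^ ((m₀:ℝ)) ≤ 2 * R := by
      have h1 : (m₀ : ℝ) ≤ Real.logb 2 R + 1 := by
        have := Int.ceil_lt_add_one (Real.logb 2 R)
        push_cast at this ⊢
        linarith
      calc (2:ℝ) ^ ((m₀:ℝ)) ≤ 2 ^ (Real.logb 2 R + 1) :=
            (Real.rpow_le_rpow_left_iff (by norm_num)).mpr h1
        _ = 2 * R := by
            rw [Real.rpow_add (by norm_num), Real.rpow_one,
              Real.rpow_logb (b := 2) (by norm_num) (by norm_num) hRpos]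
            ring
    -- the levels
    set lam : ℤ → ℝ≥0∞ := fun m => ENNReal.ofReal ((2:ℝ) ^ ((m:ℝ))) with hlam
    have hlam0 : ∀ m, lam m ≠ 0 := by
      intro m; simp [hlam, ENNReal.ofReal_eq_zero, not_le]
      positivity
    have hlam' : ∀ m, lam m ≠ ⊤ := fun m => ENNReal.ofReal_ne_top
    set Ω : ℤ → Set (Fin n → ℝ) := fun m => {x | lam m < dyadicMaximal τ x} with hΩ
    have hdec : ∀ m : ℤ, ∃ S : Set (DyadicCube n),
        (∀ D ∈ S, lam m * ENNReal.ofReal D.vol < τ D.set) ∧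
        S.PairwiseDisjoint DyadicCube.set ∧
        (⋃ D ∈ S, D.set) = Ω m := by
      intro m
      exact DyadicCube.exists_maximal_decomp hn τ (by rw [hτuniv]; exact hσItop)
        (lam m) (hlam0 m) (hlam' m)
    choose S hS1 hS2 hS3 using hdec
    have hΩmeas : ∀ m, MeasurableSet (Ω m) := by
      intro m
      rw [← hS3 m]
      exact MeasurableSet.biUnion (Set.to_countable _)
        (fun D _ => D.measurableSet_set)
    have hτΩle : ∀ m, τ (Ω m) ≤ σ I.set := by
      intro m
      rw [← hτuniv]; exact measure_mono (Set.subset_univ _)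
    -- per-cube estimates
    have hvle : ∀ m, ∀ D ∈ S m, ENNReal.ofReal D.vol ≤ (lam m)⁻¹ * τ D.set := by
      intro m D hD
      have h1 := (hS1 m D hD).le
      calc ENNReal.ofReal D.vol
          = (lam m)⁻¹ * (lam m * ENNReal.ofReal D.vol) := by
            rw [← mul_assoc, ENNReal.inv_mul_cancel (hlam0 m) (hlam' m), one_mul]
        _ ≤ (lam m)⁻¹ * τ D.set := mul_le_mul_right h1 _
    have key1 : ∀ m, ∀ D ∈ S m,
        ω D.set ≤ A ^ p * ((lam m) ^ (-p) * τ D.set) := by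
      intro m D hD
      have hlt := hS1 m D hD
      have hτσ : τ D.set ≤ σ D.set := hτle D.set D.measurableSet_set
      have hltσ : lam m * ENNReal.ofReal D.vol < σ D.set := lt_of_lt_of_le hlt hτσ
      have hσD0 : σ D.set ≠ 0 := by
        intro h0
        rw [h0] at hltσ
        exact (not_lt_of_ge zero_le) hltσ
      have hσD' : σ D.set ≠ ⊤ := (DyadicCube.measure_lt_top σ D).ne
      have hb := hωJ D.toCube (by rw [D.set_toCube]; exact hσD0)
      rw [D.set_toCube, D.vol_toCube] at hb
      have hdiv : ENNReal.ofReal D.vol / σ D.set ≤ (lam m)⁻¹ := by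
        rw [ENNReal.div_le_iff_le_mul (Or.inl hσD0) (Or.inl hσD')]
        calc ENNReal.ofReal D.vol ≤ (lam m)⁻¹ * τ D.set := hvle m D hD
          _ ≤ (lam m)⁻¹ * σ D.set := mul_le_mul_right hτσ _
      have hdivp : (ENNReal.ofReal D.vol / σ D.set) ^ (p-1) ≤ ((lam m)⁻¹) ^ (p-1) :=
        ENNReal.rpow_le_rpow hdiv (by linarith)
      have hL : (lam m)⁻¹ * ((lam m)⁻¹) ^ (p-1) = (lam m) ^ (-p) := by
        have e2 : ((lam m)⁻¹) ^ (p-1) = (lam m) ^ (-(p-1)) := by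
          rw [ENNReal.inv_rpow, ← ENNReal.rpow_neg]
        have e1 : (lam m)⁻¹ = (lam m) ^ (-1:ℝ) := (ENNReal.rpow_neg_one _).symm
        rw [e2, e1, ← ENNReal.rpow_add _ _ (hlam0 m) (hlam' m)]
        congr 1
        ring
      calc ω D.set ≤ A ^ p * ENNReal.ofReal D.vol *
            (ENNReal.ofReal D.vol / σ D.set) ^ (p-1) := hb
        _ ≤ A ^ p * ((lam m)⁻¹ * τ D.set) * ((lam m)⁻¹) ^ (p-1) :=
            mul_le_mul' (mul_le_mul_right (hvle m D hD) _) hdivp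
        _ = A ^ p * (((lam m)⁻¹ * ((lam m)⁻¹) ^ (p-1)) * τ D.set) := by ring
        _ = A ^ p * ((lam m) ^ (-p) * τ D.set) := by rw [hL]
    have hτS : ∀ m, ∑' D : S m, τ (D : DyadicCube n).set = τ (Ω m) := by
      intro m
      rw [← measure_biUnion (Set.to_countable _) (hS2 m)
        (fun D _ => D.measurableSet_set), hS3]
    have key2 : ∀ m, ω (Ω m ∩ I.set) ≤ A ^ p * ((lam m) ^ (-p) * τ (Ω m)) := by
      intro m
      calc ω (Ω m ∩ I.set) ≤ ω (Ω m) := measure_mono Set.inter_subset_left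
        _ = ω (⋃ D ∈ S m, D.set) := by rw [hS3]
        _ ≤ ∑' D : S m, ω (D : DyadicCube n).set :=
            measure_biUnion_le ω (Set.to_countable _) _
        _ ≤ ∑' D : S m, A ^ p * ((lam m) ^ (-p) * τ (D : DyadicCube n).set) :=
            ENNReal.tsum_le_tsum (fun D => key1 m D D.2)
        _ = A ^ p * ((lam m) ^ (-p) * ∑' D : S m, τ (D : DyadicCube n).set) := by
            rw [ENNReal.tsum_mul_left, ENNReal.tsum_mul_left]
        _ = A ^ p * ((lam m) ^ (-p) * τ (Ω m)) := by rw [hτS]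
    have key3 : ∀ m, volume (Ω m) ≤ (lam m)⁻¹ * σ I.set := by
      intro m
      calc volume (Ω m) = volume (⋃ D ∈ S m, D.set) := by rw [hS3]
        _ ≤ ∑' D : S m, volume (D : DyadicCube n).set :=
            measure_biUnion_le volume (Set.to_countable _) _
        _ = ∑' D : S m, ENNReal.ofReal (D : DyadicCube n).vol :=
            tsum_congr (fun D => (D : DyadicCube n).volume_set)
        _ ≤ ∑' D : S m, (lam m)⁻¹ * τ (D : DyadicCube n).set :=
            ENNReal.tsum_le_tsum (fun D => hvle m D D.2)
        _ = (lam m)⁻¹ * τ (Ω m) := by rw [ENNReal.tsum_mul_left, hτS]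
        _ ≤ (lam m)⁻¹ * σ I.set := mul_le_mul_right (hτΩle m) _
    have key4 : ∀ j : ℕ, τ (Ω (m₀ + j)) ≤ ENNReal.ofReal C * r ^ j * σ I.set := by
      intro j
      set m : ℤ := m₀ + j with hm
      have hmeasE : MeasurableSet (Ω m ∩ I.set) := (hΩmeas m).inter I.measurableSet_set
      have h1 : τ (Ω m) = σ (Ω m ∩ I.set) := by
        rw [hτ, Measure.restrict_apply (hΩmeas m)]
      have h2 := hAinf I (Ω m ∩ I.set) Set.inter_subset_right hmeasE
      have hvolE : (volume (Ω m ∩ I.set)).toReal ≤ ((2:ℝ)^((m:ℝ)))⁻¹ * (σ I.set).toReal := by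
        have hle : volume (Ω m ∩ I.set) ≤ (lam m)⁻¹ * σ I.set :=
          le_trans (measure_mono Set.inter_subset_left) (key3 m)
        have hfin : (lam m)⁻¹ * σ I.set ≠ ⊤ := by
          apply ENNReal.mul_ne_top _ hσItop
          rw [ENNReal.inv_ne_top]
          exact hlam0 m
        have := ENNReal.toReal_mono hfin hle
        rwa [ENNReal.toReal_mul, ENNReal.toReal_inv,
          ENNReal.toReal_ofReal (by positivity)] at this
      have hratio : (volume (Ω m ∩ I.set)).toReal / I.vol ≤ (2:ℝ) ^ (((m₀ - m : ℤ)):ℝ) := by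
        calc (volume (Ω m ∩ I.set)).toReal / I.vol
            ≤ (((2:ℝ)^((m:ℝ)))⁻¹ * (σ I.set).toReal) / I.vol :=
              (div_le_div_iff_of_pos_right hIvol).mpr hvolE
          _ = ((2:ℝ)^((m:ℝ)))⁻¹ * R := by rw [hR]; ring
          _ ≤ ((2:ℝ)^((m:ℝ)))⁻¹ * (2:ℝ)^((m₀:ℝ)) := by
              apply mul_le_mul_of_nonneg_left hm₀1
              positivity
          _ = (2:ℝ) ^ (((m₀ - m : ℤ)):ℝ) := by
              rw [← Real.rpow_neg (by norm_num), ← Real.rpow_add (by norm_num)]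
              congr 1
              push_cast
              ring
      have h3 : τ (Ω m) ≤ ENNReal.ofReal (C * ((2:ℝ) ^ (((m₀ - m : ℤ)):ℝ)) ^ ε) * σ I.set := by
        rw [h1]
        refine le_trans h2 (mul_le_mul_left (ENNReal.ofReal_le_ofReal ?_) _)
        apply mul_le_mul_of_nonneg_left _ hC.le
        apply Real.rpow_le_rpow (div_nonneg ENNReal.toReal_nonneg hIvol.le) hratio hε.le
      refine le_trans h3 (le_of_eq ?_)
      congr 1
      have hcast : (((m₀ - m : ℤ)):ℝ) = -(j:ℝ) := by rw [hm]; push_cast; ring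
      rw [hcast]
      have hpow : ((2:ℝ) ^ (-(j:ℝ))) ^ ε = ((2:ℝ) ^ (-ε)) ^ (j:ℕ) := by
        rw [← Real.rpow_natCast ((2:ℝ) ^ (-ε)) j,
          ← Real.rpow_mul (by norm_num), ← Real.rpow_mul (by norm_num)]
        congr 1
        ring
      rw [hpow, ENNReal.ofReal_mul hC.le, ENNReal.ofReal_pow (by positivity), hr]
    -- the covering of I by level sets
    set T : Set (Fin n → ℝ) := (⋂ j : ℕ, Ω (m₀ + j)) ∩ I.set with hT
    set U : ℕ → Set (Fin n → ℝ) := fun j => (Ω (m₀ + j) \ Ω (m₀ + j + 1)) ∩ I.set with hU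
    have hcover : I.set ⊆ (I.set \ Ω m₀) ∪ ((⋃ j, U j) ∪ T) := by
      intro x hx
      by_cases h0 : x ∈ Ω m₀
      · by_cases hall : ∀ j : ℕ, x ∈ Ω (m₀ + j)
        · exact Or.inr (Or.inr ⟨Set.mem_iInter.mpr hall, hx⟩)
        · push_neg at hall
          have hex : ∃ j : ℕ, x ∉ Ω (m₀ + j) := hall
          have hspec : x ∉ Ω (m₀ + (Nat.find hex : ℕ)) := Nat.find_spec hex
          have hj₀0 : Nat.find hex ≠ 0 := by
            intro h
            rw [h] at hspec
            simp only [Nat.cast_zero, add_zero] at hspec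
            exact hspec h0
          obtain ⟨i, hi⟩ : ∃ i, Nat.find hex = i + 1 := ⟨Nat.find hex - 1, by omega⟩
          have hmem : x ∈ Ω (m₀ + i) := by
            by_contra hcon
            exact Nat.find_min hex (by omega) hcon
          refine Or.inr (Or.inl (Set.mem_iUnion.mpr ⟨i, ⟨⟨hmem, ?_⟩, hx⟩⟩))
          have : (m₀ + (i:ℤ) + 1) = m₀ + ((i + 1 : ℕ) : ℤ) := by push_cast; ring
          rw [this, ← hi]
          exact hspec
      · exact Or.inl ⟨hx, h0⟩
    -- the top piece is ω-null
    have hωT : ω T = 0 := by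
      set q : ℝ≥0∞ := ENNReal.ofReal ((2:ℝ) ^ (-p)) with hq
      have hq1 : q < 1 := by
        rw [hq, ← ENNReal.ofReal_one]
        exact ENNReal.ofReal_lt_ofReal_iff_of_nonneg (by positivity) |>.mpr
          (Real.rpow_lt_one_of_one_lt_of_neg (by norm_num) (by linarith))
      set cT : ℝ≥0∞ := A ^ p * ((lam m₀) ^ (-p) * σ I.set) with hcT
      have hcTne : cT ≠ ⊤ := by
        rw [hcT]
        apply ENNReal.mul_ne_top (ENNReal.rpow_ne_top_of_nonneg hp0.le hAne)
        apply ENNReal.mul_ne_top _ hσItop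
        rw [hlam]
        rw [ENNReal.ofReal_rpow_of_pos (by positivity)]
        exact ENNReal.ofReal_ne_top
      have hlamsplit : ∀ j : ℕ, (lam (m₀ + j)) ^ (-p) = (lam m₀) ^ (-p) * q ^ j := by
        intro j
        rw [hlam, hq]
        simp only
        rw [ENNReal.ofReal_rpow_of_pos (by positivity),
          ENNReal.ofReal_rpow_of_pos (by positivity),
          ← ENNReal.ofReal_pow (by positivity),
          ← ENNReal.ofReal_mul (by positivity)]
        congr 1
        rw [← Real.rpow_natCast ((2:ℝ) ^ (-p)) j, ← Real.rpow_mul (by norm_num),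
          ← Real.rpow_mul (by norm_num), ← Real.rpow_mul (by norm_num),
          ← Real.rpow_add (by norm_num)]
        congr 1
        push_cast
        ring
      have hbound : ∀ j : ℕ, ω T ≤ cT * q ^ j := by
        intro j
        have hTsub : T ⊆ Ω (m₀ + j) ∩ I.set := by
          intro x hxT
          exact ⟨Set.mem_iInter.mp hxT.1 j, hxT.2⟩
        calc ω T ≤ ω (Ω (m₀ + j) ∩ I.set) := measure_mono hTsub
          _ ≤ A ^ p * ((lam (m₀ + j)) ^ (-p) * τ (Ω (m₀ + j))) := key2 _
          _ ≤ A ^ p * ((lam (m₀ + j)) ^ (-p) * σ I.set) :=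
              mul_le_mul_right (mul_le_mul_right (hτΩle _) _) _
          _ = cT * q ^ j := by rw [hlamsplit j, hcT]; ring
      have htend : Tendsto (fun j : ℕ => cT * q ^ j) atTop (𝓝 0) := by
        have h0 := ENNReal.tendsto_pow_atTop_nhds_zero_of_lt_one hq1
        have := ENNReal.Tendsto.const_mul (a := cT) h0 (Or.inr hcTne)
        simpa using this
      exact le_zero_iff.mp (ge_of_tendsto htend (Filter.Eventually.of_forall hbound))
    -- baseline estimate
    have hbase : (lam m₀) ^ p * ω I.set ≤ (2:ℝ≥0∞) ^ p * A ^ p * σ I.set := by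
      have h1 : ω I.set ≤ A ^ p * v * (v / σ I.set) ^ (p-1) := hωJ I hσI0
      set DD : ℝ≥0∞ := σ I.set / v with hDD
      have hDD0 : DD ≠ 0 := by
        rw [hDD]
        simp [ENNReal.div_eq_zero_iff, hσI0, hv']
      have hDD' : DD ≠ ⊤ := by
        rw [hDD]
        simp [ENNReal.div_eq_top, hσItop, hv0]
      have hDR : ENNReal.ofReal R = DD := by
        rw [hR, hDD, hv, ENNReal.ofReal_div_of_pos hIvol, ENNReal.ofReal_toReal hσItop]
      have hlam₀ : (lam m₀) ^ p ≤ (2:ℝ≥0∞) ^ p * DD ^ p := by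
        have hle : lam m₀ ≤ 2 * DD := by
          rw [← hDR, hlam]
          calc ENNReal.ofReal ((2:ℝ) ^ ((m₀:ℝ))) ≤ ENNReal.ofReal (2 * R) :=
                ENNReal.ofReal_le_ofReal hm₀2
            _ = 2 * ENNReal.ofReal R := by
                rw [ENNReal.ofReal_mul (by norm_num)]
                norm_num
        calc (lam m₀) ^ p ≤ (2 * DD) ^ p := ENNReal.rpow_le_rpow hle hp0.le
          _ = (2:ℝ≥0∞) ^ p * DD ^ p :=
              ENNReal.mul_rpow_of_ne_top (by simp : (2:ℝ≥0∞) ≠ ⊤) hDD' p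
      have hkeyD : DD ^ p * (v / σ I.set) ^ (p-1) * v = σ I.set := by
        have hinv : v / σ I.set = DD⁻¹ := by
          rw [hDD, ENNReal.inv_div (Or.inl hv') (Or.inl hv0)]
        rw [hinv, ENNReal.inv_rpow, ← ENNReal.rpow_neg,
          ← ENNReal.rpow_add _ _ hDD0 hDD']
        have : p + -(p-1) = 1 := by ring
        rw [this, ENNReal.rpow_one, hDD, ENNReal.div_mul_cancel hv0 hv']
      calc (lam m₀) ^ p * ω I.set
          ≤ ((2:ℝ≥0∞) ^ p * DD ^ p) * (A ^ p * v * (v / σ I.set) ^ (p-1)) :=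
            mul_le_mul' hlam₀ h1
        _ = (2:ℝ≥0∞) ^ p * A ^ p * (DD ^ p * (v / σ I.set) ^ (p-1) * v) := by ring
        _ = (2:ℝ≥0∞) ^ p * A ^ p * σ I.set := by rw [hkeyD]
    -- step identity
    have hlamstep : ∀ m : ℤ, (lam (m+1)) ^ p * (lam m) ^ (-p) = (2:ℝ≥0∞) ^ p := by
      intro m
      rw [hlam]
      simp only
      rw [ENNReal.ofReal_rpow_of_pos (by positivity),
        ENNReal.ofReal_rpow_of_pos (by positivity),
        ← ENNReal.ofReal_mul (by positivity),
        ← Real.rpow_mul (by norm_num), ← Real.rpow_mul (by norm_num),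
        ← Real.rpow_add (by norm_num)]
      have : ((m+1:ℤ):ℝ) * p + (m:ℝ) * (-p) = p := by push_cast; ring
      rw [this]
      rw [← ENNReal.ofReal_rpow_of_pos (by norm_num)]
      norm_num
    -- the series estimate
    have hseries : ∑' j : ℕ, (lam (m₀ + j + 1)) ^ p * ω (Ω (m₀ + j) ∩ I.set) ≤
        (2:ℝ≥0∞) ^ p * A ^ p * (ENNReal.ofReal C * G) * σ I.set := by
      have hterm : ∀ j : ℕ, (lam (m₀ + j + 1)) ^ p * ω (Ω (m₀ + j) ∩ I.set) ≤
          (2:ℝ≥0∞) ^ p * A ^ p * (ENNReal.ofReal C * σ I.set) * r ^ j := by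
        intro j
        calc (lam (m₀ + j + 1)) ^ p * ω (Ω (m₀ + j) ∩ I.set)
            ≤ (lam (m₀ + j + 1)) ^ p * (A ^ p * ((lam (m₀ + j)) ^ (-p) * τ (Ω (m₀ + j)))) :=
              mul_le_mul_right (key2 _) _
          _ = ((lam (m₀ + j + 1)) ^ p * (lam (m₀ + j)) ^ (-p)) * A ^ p * τ (Ω (m₀ + j)) := by
              ring
          _ = (2:ℝ≥0∞) ^ p * A ^ p * τ (Ω (m₀ + j)) := by rw [hlamstep (m₀ + j)]
          _ ≤ (2:ℝ≥0∞) ^ p * A ^ p * (ENNReal.ofReal C * r ^ j * σ I.set) :=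
              mul_le_mul_right (key4 j) _
          _ = (2:ℝ≥0∞) ^ p * A ^ p * (ENNReal.ofReal C * σ I.set) * r ^ j := by ring
      calc ∑' j : ℕ, (lam (m₀ + j + 1)) ^ p * ω (Ω (m₀ + j) ∩ I.set)
          ≤ ∑' j : ℕ, (2:ℝ≥0∞) ^ p * A ^ p * (ENNReal.ofReal C * σ I.set) * r ^ j :=
            ENNReal.tsum_le_tsum hterm
        _ = (2:ℝ≥0∞) ^ p * A ^ p * (ENNReal.ofReal C * σ I.set) * ∑' j : ℕ, r ^ j := by
            rw [ENNReal.tsum_mul_left]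
        _ = (2:ℝ≥0∞) ^ p * A ^ p * (ENNReal.ofReal C * σ I.set) * G := by
            rw [ENNReal.tsum_geometric, hG]
        _ = (2:ℝ≥0∞) ^ p * A ^ p * (ENNReal.ofReal C * G) * σ I.set := by ring
    -- assemble the integral
    have hint1 : ∫⁻ x in I.set \ Ω m₀, (dyadicMaximal τ x) ^ p ∂ω ≤
        (lam m₀) ^ p * ω I.set := by
      calc ∫⁻ x in I.set \ Ω m₀, (dyadicMaximal τ x) ^ p ∂ω
          ≤ ∫⁻ _ in I.set \ Ω m₀, (lam m₀) ^ p ∂ω := by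
            apply setLIntegral_mono measurable_const
            intro x hx
            have hxn : ¬ (lam m₀ < dyadicMaximal τ x) := hx.2
            exact ENNReal.rpow_le_rpow (not_lt.mp hxn) hp0.le
        _ = (lam m₀) ^ p * ω (I.set \ Ω m₀) := setLIntegral_const _ _
        _ ≤ (lam m₀) ^ p * ω I.set :=
            mul_le_mul_right (measure_mono Set.diff_subset) _
    have hint2 : ∀ j : ℕ, ∫⁻ x in U j, (dyadicMaximal τ x) ^ p ∂ω ≤
        (lam (m₀ + j + 1)) ^ p * ω (Ω (m₀ + j) ∩ I.set) := by
      intro j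
      calc ∫⁻ x in U j, (dyadicMaximal τ x) ^ p ∂ω
          ≤ ∫⁻ _ in U j, (lam (m₀ + j + 1)) ^ p ∂ω := by
            apply setLIntegral_mono measurable_const
            intro x hx
            have hxn : ¬ (lam (m₀ + j + 1) < dyadicMaximal τ x) := hx.1.2
            exact ENNReal.rpow_le_rpow (not_lt.mp hxn) hp0.le
        _ = (lam (m₀ + j + 1)) ^ p * ω (U j) := setLIntegral_const _ _
        _ ≤ (lam (m₀ + j + 1)) ^ p * ω (Ω (m₀ + j) ∩ I.set) := by
            apply mul_le_mul_right
            apply measure_mono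
            exact Set.inter_subset_inter_left _ Set.diff_subset
    calc ∫⁻ x in I.set, (dyadicMaximal τ x) ^ p ∂ω
        ≤ ∫⁻ x in (I.set \ Ω m₀) ∪ ((⋃ j, U j) ∪ T), (dyadicMaximal τ x) ^ p ∂ω :=
          lintegral_mono_set hcover
      _ ≤ (∫⁻ x in I.set \ Ω m₀, (dyadicMaximal τ x) ^ p ∂ω) +
          ((∫⁻ x in ⋃ j, U j, (dyadicMaximal τ x) ^ p ∂ω) +
            ∫⁻ x in T, (dyadicMaximal τ x) ^ p ∂ω) := by
          refine le_trans (lintegral_union_le _ _ _) ?_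
          exact add_le_add_right (lintegral_union_le _ _ _) _
      _ ≤ (lam m₀) ^ p * ω I.set +
          ((∑' j : ℕ, (lam (m₀ + j + 1)) ^ p * ω (Ω (m₀ + j) ∩ I.set)) + 0) := by
          apply add_le_add hint1
          apply add_le_add
          · exact le_trans (lintegral_iUnion_le _ _) (ENNReal.tsum_le_tsum hint2)
          · rw [setLIntegral_measure_zero _ _ hωT]
      _ ≤ (2:ℝ≥0∞) ^ p * A ^ p * σ I.set +
          ((2:ℝ≥0∞) ^ p * A ^ p * (ENNReal.ofReal C * G) * σ I.set + 0) := by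
          exact add_le_add hbase (add_le_add hseries (le_refl 0))
      _ = Ctot * σ I.set := by rw [hCtot]; ring
      _ ≤ ENNReal.ofReal (Ctot.toReal + 1) * σ I.set := by
          apply mul_le_mul_left
          calc Ctot = ENNReal.ofReal Ctot.toReal := (ENNReal.ofReal_toReal hCtotne).symm
            _ ≤ ENNReal.ofReal (Ctot.toReal + 1) :=
                ENNReal.ofReal_le_ofReal (by linarith)
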